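/- Let d ≥ 1 and let φ : (0,1) → [0,d] satisfy 0 ≤ (1-λ)φ(λ) - (1-θ)φ(θ) ≤ (θ-λ)φ(λ/θ) for all 0 < λ < θ < 1. Define the running supremum Φ(θ) = sup_{0 < θ' ≤ θ} φ(θ'). Then Φ also satisfies the same constraint: 0 ≤ (1-λ)Φ(λ) - (1-θ)Φ(θ) ≤ (θ-λ)Φ(λ/θ) for all 0 < λ < θ < 1. -/

import Mathlib

/-- the running supremum Φ(θ) = sup_{0<θ'≤θ} φ(θ') of a function
in 𝒜_d again satisfies the 𝒜_d constraint. -/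
theorem stmt_17 (d : ℕ) (hd : 1 ≤ d) (φ : ℝ → ℝ)
    (hrange : ∀ θ : ℝ, 0 < θ → θ < 1 → 0 ≤ φ θ ∧ φ θ ≤ d)
    (hconstr : ∀ l θ : ℝ, 0 < l → l < θ → θ < 1 →
      0 ≤ (1 - l) * φ l - (1 - θ) * φ θ ∧
      (1 - l) * φ l - (1 - θ) * φ θ ≤ (θ - l) * φ (l / θ))
    (Φ : ℝ → ℝ) (hΦ : ∀ θ : ℝ, Φ θ = sSup (φ '' Set.Ioc 0 θ)) :
    ∀ l θ : ℝ, 0 < l → l < θ → θ < 1 →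
      0 ≤ (1 - l) * Φ l - (1 - θ) * Φ θ ∧
      (1 - l) * Φ l - (1 - θ) * Φ θ ≤ (θ - l) * Φ (l / θ) := by
  have key : ∀ t : ℝ, 0 < t → t < 1 → BddAbove (φ '' Set.Ioc 0 t) := by
    intro t ht0 ht1
    exact ⟨d, fun x hx => by
      obtain ⟨y, hy, rfl⟩ := hx
      exact (hrange y hy.1 (lt_of_le_of_lt hy.2 ht1)).2⟩
  have hge : ∀ t : ℝ, 0 < t → t < 1 → φ t ≤ Φ t := by
    intro t ht0 ht1
    rw [hΦ]
    exact le_csSup (key t ht0 ht1) ⟨t, ⟨ht0, le_refl t⟩, rfl⟩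
  have hnn : ∀ t : ℝ, 0 < t → t < 1 → 0 ≤ Φ t := fun t h0 h1 =>
    le_trans (hrange t h0 h1).1 (hge t h0 h1)
  have hmono : ∀ s t : ℝ, 0 < s → s ≤ t → t < 1 → Φ s ≤ Φ t := by
    intro s t hs hst ht
    rw [hΦ, hΦ]
    exact csSup_le_csSup (key t (lt_of_lt_of_le hs hst) ht)
      ⟨φ s, ⟨s, ⟨hs, le_refl s⟩, rfl⟩⟩
      (Set.image_mono (Set.Ioc_subset_Ioc_right hst))
  intro l θ hl hlθ hθ1
  have hl1 : l < 1 := hlθ.trans hθ1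
  have hΦl : 0 ≤ Φ l := hnn l hl hl1
  have hθ0 : 0 < θ := hl.trans hlθ
  -- part 1
  have h1 : (1 - θ) * Φ θ ≤ (1 - l) * Φ l := by
    have hsup : Φ θ ≤ (1 - l) * Φ l / (1 - θ) := by
      rw [hΦ]
      refine csSup_le ⟨φ θ, ⟨θ, ⟨hθ0, le_refl θ⟩, rfl⟩⟩ ?_
      rintro x ⟨y, ⟨hy0, hyθ⟩, rfl⟩
      rw [le_div_iff₀ (by linarith : (0:ℝ) < 1 - θ)]
      rcases le_or_gt y l with h | h
      · have hyΦ : φ y ≤ Φ l := by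
          rw [hΦ]; exact le_csSup (key l hl hl1) ⟨y, ⟨hy0, h⟩, rfl⟩
        have h0 : 0 ≤ φ y := (hrange y hy0 (by linarith)).1
        nlinarith
      · have hy1 : y < 1 := lt_of_le_of_lt hyθ hθ1
        have hc := (hconstr l y hl h hy1).1
        have h0 : 0 ≤ φ y := (hrange y hy0 hy1).1
        have hfl : φ l ≤ Φ l := hge l hl hl1
        nlinarith
    calc (1 - θ) * Φ θ ≤ (1 - θ) * ((1 - l) * Φ l / (1 - θ)) :=
          mul_le_mul_of_nonneg_left hsup (by linarith)
      _ = (1 - l) * Φ l := by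
          rw [mul_comm]
          exact div_mul_cancel₀ _ (ne_of_gt (by linarith : (0:ℝ) < 1 - θ))
  refine ⟨by linarith, ?_⟩
  have hlt1 : l / θ < 1 := (div_lt_one hθ0).2 hlθ
  have h2 : Φ l ≤ Φ (l / θ) := hmono l (l / θ) hl
    (by rw [le_div_iff₀ hθ0]; nlinarith) hlt1
  have h3 : Φ l ≤ Φ θ := hmono l θ hl hlθ.le hθ1
  nlinarith [hnn θ hθ0 hθ1]
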